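/- Let N ≥ 2, f ∈ C¹(ℝ), and u a nonconstant semi-stable radial solution of -Δu = f(u) on the punctured closed unit ball of ℝ^N. Then the radial derivative u_r vanishes at most at one point of (0,1). -/

import Mathlib

open Set intervalIntegral MeasureTheory NNReal

private lemma stmt_4_aux (N : ℕ) (hN : 2 ≤ N) (f : ℝ → ℝ) (hf : ContDiff ℝ 1 f)
    (u : ℝ → ℝ) (hu : ContDiffOn ℝ 2 u (Ioc (0 : ℝ) 1))
    (heq : ∀ r ∈ Ioc (0 : ℝ) 1,
      -(deriv (deriv u) r) - ((N : ℝ) - 1) / r * deriv u r = f (u r))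
    (hstab : ∀ r₁ r₂ : ℝ, 0 < r₁ → r₁ < r₂ → r₂ < 1 → ∀ η : ℝ → ℝ,
      (∃ C, LipschitzOnWith C η (Icc r₁ r₂)) →
      η r₁ * deriv u r₁ = 0 → η r₂ * deriv u r₂ = 0 →
      0 ≤ ∫ r in r₁..r₂,
        r ^ ((N : ℝ) - 1) * (deriv u r) ^ 2 *
          ((deriv η r) ^ 2 - ((N : ℝ) - 1) / r ^ 2 * (η r) ^ 2))
    (hnc : ¬ ∃ c : ℝ, ∀ r ∈ Ioc (0 : ℝ) 1, u r = c)
    (r₁ r₂ : ℝ) (h1 : r₁ ∈ Ioo (0:ℝ) 1) (h2 : r₂ ∈ Ioo (0:ℝ) 1) (h12 : r₁ < r₂)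
    (hd1 : deriv u r₁ = 0) (hd2 : deriv u r₂ = 0) : False := by
  -- regularity
  have huo : ContDiffOn ℝ 2 u (Ioo (0:ℝ) 1) := hu.mono Ioo_subset_Ioc_self
  have hdo : ContDiffOn ℝ 1 (deriv u) (Ioo (0:ℝ) 1) :=
    huo.deriv_of_isOpen isOpen_Ioo (by norm_num)
  have hcu : ContinuousOn u (Ioo (0:ℝ) 1) := huo.continuousOn
  have hcdu : ContinuousOn (deriv u) (Ioo (0:ℝ) 1) := hdo.continuousOn
  have hder : ∀ t ∈ Ioo (0:ℝ) 1, HasDerivAt u (deriv u t) t := fun t ht =>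
    ((huo.differentiableOn (by norm_num)).differentiableAt (isOpen_Ioo.mem_nhds ht)).hasDerivAt
  have hder2 : ∀ t ∈ Ioo (0:ℝ) 1, HasDerivAt (deriv u) (deriv (deriv u) t) t := fun t ht =>
    ((hdo.differentiableOn (by norm_num)).differentiableAt (isOpen_Ioo.mem_nhds ht)).hasDerivAt
  have hIcc : Icc r₁ r₂ ⊆ Ioo (0:ℝ) 1 :=
    fun t ht => ⟨lt_of_lt_of_le h1.1 ht.1, lt_of_le_of_lt ht.2 h2.2⟩
  -- Step 1 : deriv u vanishes on Icc r₁ r₂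
  have hz : ∀ t ∈ Icc r₁ r₂, deriv u t = 0 := by
    set g : ℝ → ℝ := fun r => ((N:ℝ)-1)/r^2 * r^((N:ℝ)-1) * (deriv u r)^2 with hg
    have hpos : ∀ t ∈ Icc r₁ r₂, 0 < ((N:ℝ)-1)/t^2 * t^((N:ℝ)-1) := by
      intro t ht
      have ht0 : 0 < t := (hIcc ht).1
      have hN1 : (0:ℝ) < (N:ℝ) - 1 := by
        have : (2:ℝ) ≤ N := by exact_mod_cast hN
        linarith
      positivity
    have hstab1 := hstab r₁ r₂ h1.1 h12 h2.2 (fun _ => 1)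
      ⟨0, (LipschitzWith.const 1).lipschitzOnWith⟩ (by simp [hd1]) (by simp [hd2])
    have hint : (∫ r in r₁..r₂,
          r ^ ((N : ℝ) - 1) * (deriv u r) ^ 2 *
            ((deriv (fun _ => (1:ℝ)) r) ^ 2 - ((N : ℝ) - 1) / r ^ 2 * ((fun _ => (1:ℝ)) r) ^ 2))
        = -∫ r in r₁..r₂, g r := by
      rw [← intervalIntegral.integral_neg]
      apply intervalIntegral.integral_congr
      intro r _
      simp only [hg, deriv_const']
      ring
    rw [hint] at hstab1
    have hgc : ContinuousOn g (Icc r₁ r₂) := by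
      apply ContinuousOn.mul
      apply ContinuousOn.mul
      · exact continuousOn_const.div (continuousOn_pow 2)
          (fun t ht => pow_ne_zero _ (ne_of_gt (hIcc ht).1))
      · exact continuousOn_id.rpow_const (fun t ht => Or.inl (ne_of_gt (hIcc ht).1))
      · exact ((hcdu.mono hIcc).pow 2)
    have hgi : IntervalIntegrable g volume r₁ r₂ := by
      apply ContinuousOn.intervalIntegrable
      rwa [uIcc_of_le h12.le]
    have hgnn : 0 ≤ᵐ[volume.restrict (Ioc r₁ r₂)] g := by
      filter_upwards [ae_restrict_mem measurableSet_Ioc] with t ht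
      exact mul_nonneg (hpos t (Ioc_subset_Icc_self ht)).le (sq_nonneg _)
    have hgz : ∫ r in r₁..r₂, g r = 0 := by
      have h0 : 0 ≤ ∫ r in r₁..r₂, g r := intervalIntegral.integral_nonneg h12.le
        (fun t ht => mul_nonneg (hpos t ht).le (sq_nonneg _))
      linarith
    have hae : g =ᵐ[volume.restrict (Ioc r₁ r₂)] 0 :=
      (intervalIntegral.integral_eq_zero_iff_of_le_of_nonneg_ae h12.le hgnn hgi).mp hgz
    have hae' : g =ᵐ[volume.restrict (Icc r₁ r₂)] 0 := by
      rwa [Measure.restrict_congr_set Ioc_ae_eq_Icc] at hae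
    have heqon : EqOn g 0 (Icc r₁ r₂) := by
      apply Measure.eqOn_of_ae_eq hae' hgc continuousOn_const
      rw [interior_Icc, closure_Ioo (ne_of_lt h12)]
    intro t ht
    have hA := hpos t ht
    have hzz := heqon ht
    simp only [Pi.zero_apply] at hzz
    have hd2' : (deriv u t)^2 = 0 := by
      rcases mul_eq_zero.mp hzz with h | h
      · exact absurd h (ne_of_gt hA)
      · exact h
    exact pow_eq_zero_iff (by norm_num : (2:ℕ) ≠ 0) |>.mp hd2'
  -- the constant value
  set t₀ : ℝ := (r₁ + r₂)/2 with ht₀_def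
  have ht₀mem : t₀ ∈ Icc r₁ r₂ := ⟨by rw [ht₀_def]; linarith, by rw [ht₀_def]; linarith⟩
  have ht₀Ioo : t₀ ∈ Ioo (0:ℝ) 1 := hIcc ht₀mem
  set c : ℝ := u t₀ with hc_def
  have hut₀ : u t₀ = c := rfl
  have hdut₀ : deriv u t₀ = 0 := hz t₀ ht₀mem
  have hfc : f c = 0 := by
    have hevent : deriv u =ᶠ[nhds t₀] fun _ => (0:ℝ) := by
      have hmem : Ioo r₁ r₂ ∈ nhds t₀ :=
        Ioo_mem_nhds (by rw [ht₀_def]; linarith) (by rw [ht₀_def]; linarith)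
      filter_upwards [hmem] with x hx
      exact hz x (Ioo_subset_Icc_self hx)
    have hdd : deriv (deriv u) t₀ = 0 := by
      rw [Filter.EventuallyEq.deriv_eq hevent]
      exact deriv_const _ _
    have h := heq t₀ ⟨ht₀Ioo.1, ht₀Ioo.2.le⟩
    rw [hdd, hdut₀, hut₀] at h
    rw [← h]; ring
  -- Step 2 : ODE uniqueness gives u ≡ c on any compact subinterval containing t₀
  have hglobal : ∀ a b : ℝ, 0 < a → a < t₀ → t₀ < b → b < 1 → ∀ t ∈ Icc a b, u t = c := by
    intro a b ha hat htb hb1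
    have hsub : Icc a b ⊆ Ioo (0:ℝ) 1 :=
      fun x hx => ⟨lt_of_lt_of_le ha hx.1, lt_of_le_of_lt hx.2 hb1⟩
    have hsub' : Ioo a b ⊆ Ioo (0:ℝ) 1 := fun x hx => hsub (Ioo_subset_Icc_self hx)
    have ht₀ab : t₀ ∈ Icc a b := ⟨hat.le, htb.le⟩
    obtain ⟨C, hC⟩ : ∃ C, ∀ x ∈ Icc a b, ‖u x‖ ≤ C :=
      isCompact_Icc.exists_bound_of_continuousOn (hcu.mono hsub)
    obtain ⟨L, hL0, hL⟩ : ∃ L, 0 ≤ L ∧ ∀ x ∈ Icc (-C) C, ‖deriv f x‖ ≤ L := by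
      obtain ⟨L, hL⟩ := isCompact_Icc.exists_bound_of_continuousOn
        ((hf.continuous_deriv le_rfl).continuousOn (s := Icc (-C) C))
      exact ⟨max L 0, le_max_right _ _, fun x hx => (hL x hx).trans (le_max_left _ _)⟩
    have hfL : ∀ x ∈ Icc (-C) C, ∀ y ∈ Icc (-C) C, ‖f y - f x‖ ≤ L * ‖y - x‖ := fun x hx y hy =>
      Convex.norm_image_sub_le_of_norm_deriv_le
        (fun z _ => (hf.differentiable (by norm_num)).differentiableAt)
        (fun z hz => hL z hz) (convex_Icc _ _) hx hy
    have hN1 : (0:ℝ) ≤ (N:ℝ) - 1 := by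
      have : (2:ℝ) ≤ N := by exact_mod_cast hN
      linarith
    set K₀ : ℝ := max 1 (((N:ℝ)-1)/a + L) with hK₀
    have hK₀0 : 0 ≤ K₀ := le_trans zero_le_one (le_max_left _ _)
    set sbox : Set (ℝ × ℝ) := Icc (-C) C ×ˢ (univ : Set ℝ) with hsbox
    set v : ℝ → ℝ × ℝ → ℝ × ℝ :=
      fun t p => (p.2, -(((N:ℝ)-1)/(max t a)) * p.2 - f p.1) with hv_def
    have hv : ∀ t, LipschitzOnWith K₀.toNNReal (v t) sbox := by
      intro t
      rw [lipschitzOnWith_iff_norm_sub_le]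
      intro p hp q hq
      have hKc : (K₀.toNNReal : ℝ) = K₀ := Real.coe_toNNReal _ hK₀0
      rw [hKc]
      have hD1 : ‖p.1 - q.1‖ ≤ ‖p - q‖ := by
        have := norm_fst_le (p - q); simpa using this
      have hD2 : ‖p.2 - q.2‖ ≤ ‖p - q‖ := by
        have := norm_snd_le (p - q); simpa using this
      have hDnn : 0 ≤ ‖p - q‖ := norm_nonneg _
      have hα0 : 0 ≤ ((N:ℝ)-1)/(max t a) := div_nonneg hN1 (le_trans ha.le (le_max_right t a))
      have hα : ((N:ℝ)-1)/(max t a) ≤ ((N:ℝ)-1)/a :=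
        div_le_div_of_nonneg_left hN1 ha (le_max_right t a) |>.trans_eq rfl
      rw [Prod.norm_def]
      apply max_le
      · have : ‖(v t p - v t q).1‖ = ‖p.2 - q.2‖ := by simp [hv_def]
        rw [this]
        calc ‖p.2 - q.2‖ ≤ 1 * ‖p - q‖ := by rw [one_mul]; exact hD2
          _ ≤ K₀ * ‖p - q‖ := mul_le_mul_of_nonneg_right (le_max_left _ _) hDnn
      · have e2 : (v t p - v t q).2 =
            (((N:ℝ)-1)/(max t a)) * (q.2 - p.2) + (f q.1 - f p.1) := by
          simp [hv_def]; ring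
        rw [e2]
        calc ‖(((N:ℝ)-1)/(max t a)) * (q.2 - p.2) + (f q.1 - f p.1)‖
            ≤ ‖(((N:ℝ)-1)/(max t a)) * (q.2 - p.2)‖ + ‖f q.1 - f p.1‖ := norm_add_le _ _
          _ ≤ (((N:ℝ)-1)/a) * ‖p - q‖ + L * ‖p - q‖ := by
              apply add_le_add
              · rw [norm_mul]
                have hh1 : ‖((N:ℝ)-1)/(max t a)‖ ≤ ((N:ℝ)-1)/a := by
                  rw [Real.norm_eq_abs, abs_of_nonneg hα0]; exact hα
                have hh2 : ‖q.2 - p.2‖ ≤ ‖p - q‖ := by rwa [norm_sub_rev]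
                exact mul_le_mul hh1 hh2 (norm_nonneg _) (div_nonneg hN1 ha.le)
              · have := hfL p.1 hp.1 q.1 hq.1
                calc ‖f q.1 - f p.1‖ ≤ L * ‖q.1 - p.1‖ := this
                  _ ≤ L * ‖p - q‖ := by
                      apply mul_le_mul_of_nonneg_left _ hL0
                      rwa [norm_sub_rev]
          _ = (((N:ℝ)-1)/a + L) * ‖p - q‖ := by ring
          _ ≤ K₀ * ‖p - q‖ := mul_le_mul_of_nonneg_right (le_max_right _ _) hDnn
    set F : ℝ → ℝ × ℝ := fun t => (u t, deriv u t) with hF_def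
    set G : ℝ → ℝ × ℝ := fun _ => (c, (0:ℝ)) with hG_def
    have hF' : ∀ t ∈ Ioo a b, HasDerivAt F (v t (F t)) t := by
      intro t ht
      have hh1 := hder t (hsub' ht)
      have hh2 := hder2 t (hsub' ht)
      have hmax : max t a = t := max_eq_left ht.1.le
      have hteq := heq t ⟨(hsub' ht).1, (hsub' ht).2.le⟩
      have h3 : deriv (deriv u) t = -(((N:ℝ)-1)/(max t a)) * deriv u t - f (u t) := by
        rw [hmax]; linarith
      have := hh1.prodMk hh2
      rw [h3] at this
      exact this
    have hG' : ∀ t ∈ Ioo a b, HasDerivAt G (v t (G t)) t := by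
      intro t ht
      have : v t (G t) = (0, 0) := by simp [hv_def, hG_def, hfc]
      rw [this]
      exact hasDerivAt_const t _
    have hFs : ∀ t ∈ Ioo a b, F t ∈ sbox := by
      intro t ht
      refine ⟨?_, mem_univ _⟩
      have := hC t (Ioo_subset_Icc_self ht)
      rw [Real.norm_eq_abs] at this
      exact abs_le.mp this
    have hGs : ∀ t ∈ Ioo a b, G t ∈ sbox := by
      intro t _
      refine ⟨?_, mem_univ _⟩
      have := hC t₀ ht₀ab
      rw [Real.norm_eq_abs, hut₀] at this
      exact abs_le.mp this
    have hFc : ContinuousOn F (Icc a b) := (hcu.mono hsub).prodMk (hcdu.mono hsub)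
    have hGc : ContinuousOn G (Icc a b) := continuousOn_const
    have heq₀ : F t₀ = G t₀ := by simp [hF_def, hG_def, hut₀, hdut₀]
    have hEq := ODE_solution_unique_of_mem_Icc (s := fun _ => sbox) (fun t _ => hv t) ⟨hat, htb⟩ hFc hF' hFs hGc hG' hGs heq₀
    intro t ht
    have h := hEq ht
    have : (F t).1 = (G t).1 := by rw [h]
    simpa [hF_def, hG_def] using this
  -- Step 3 : u is constant on Ioo 0 1
  have hIooconst : ∀ t ∈ Ioo (0:ℝ) 1, u t = c := by
    intro t ht
    have hmin : 0 < min t t₀ := lt_min ht.1 ht₀Ioo.1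
    have hmax : max t t₀ < 1 := max_lt ht.2 ht₀Ioo.2
    refine hglobal (min t t₀ / 2) ((max t t₀ + 1)/2) (by linarith) ?_ ?_ ?_ t ?_
    · have := min_le_right t t₀; linarith [ht₀Ioo.1]
    · have := le_max_right t t₀; linarith
    · linarith
    · constructor
      · have := min_le_left t t₀; linarith
      · have := le_max_left t t₀; linarith
  -- extend to r = 1 by continuity
  have hu1 : u 1 = c := by
    have h1cl : (1:ℝ) ∈ closure (Ioo (0:ℝ) 1) := by
      rw [closure_Ioo (by norm_num : (0:ℝ) ≠ 1)]
      exact ⟨by norm_num, le_rfl⟩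
    have hne : (nhdsWithin (1:ℝ) (Ioo (0:ℝ) 1)).NeBot :=
      mem_closure_iff_nhdsWithin_neBot.mp h1cl
    have hcont : ContinuousWithinAt u (Ioc (0:ℝ) 1) 1 :=
      hu.continuousOn.continuousWithinAt ⟨by norm_num, le_rfl⟩
    have ht1 : Filter.Tendsto u (nhdsWithin (1:ℝ) (Ioo (0:ℝ) 1)) (nhds (u 1)) :=
      hcont.tendsto.mono_left (nhdsWithin_mono _ Ioo_subset_Ioc_self)
    have ht2 : Filter.Tendsto u (nhdsWithin (1:ℝ) (Ioo (0:ℝ) 1)) (nhds c) := by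
      apply Filter.Tendsto.congr' _ tendsto_const_nhds
      filter_upwards [self_mem_nhdsWithin] with x hx
      exact (hIooconst x hx).symm
    exact tendsto_nhds_unique ht1 ht2
  exact hnc ⟨c, fun r hr => by
    rcases eq_or_lt_of_le hr.2 with h | h
    · rw [h]; exact hu1
    · exact hIooconst r ⟨hr.1, h⟩⟩

theorem stmt_4 (N : ℕ) (hN : 2 ≤ N) (f : ℝ → ℝ) (hf : ContDiff ℝ 1 f)
    (u : ℝ → ℝ) (hu : ContDiffOn ℝ 2 u (Ioc (0 : ℝ) 1))
    (heq : ∀ r ∈ Ioc (0 : ℝ) 1,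
      -(deriv (deriv u) r) - ((N : ℝ) - 1) / r * deriv u r = f (u r))
    (hstab : ∀ r₁ r₂ : ℝ, 0 < r₁ → r₁ < r₂ → r₂ < 1 → ∀ η : ℝ → ℝ,
      (∃ C, LipschitzOnWith C η (Icc r₁ r₂)) →
      η r₁ * deriv u r₁ = 0 → η r₂ * deriv u r₂ = 0 →
      0 ≤ ∫ r in r₁..r₂,
        r ^ ((N : ℝ) - 1) * (deriv u r) ^ 2 *
          ((deriv η r) ^ 2 - ((N : ℝ) - 1) / r ^ 2 * (η r) ^ 2))
    (hnc : ¬ ∃ c : ℝ, ∀ r ∈ Ioc (0 : ℝ) 1, u r = c) :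
    ∀ r₁ ∈ Ioo (0 : ℝ) 1, ∀ r₂ ∈ Ioo (0 : ℝ) 1,
      deriv u r₁ = 0 → deriv u r₂ = 0 → r₁ = r₂ := by
  intro r₁ h1 r₂ h2 hd1 hd2
  by_contra hne
  rcases lt_or_gt_of_ne hne with h | h
  · exact stmt_4_aux N hN f hf u hu heq hstab hnc r₁ r₂ h1 h2 h hd1 hd2
  · exact stmt_4_aux N hN f hf u hu heq hstab hnc r₂ r₁ h2 h1 h hd2 hd1
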